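/- In the grid-shaped turn-based game structure over a tile system (T, H, V) — in which the 'choice' states are the only states controlled by Player 1 among those where Player 1's move matters, and each choice state has one transition to every tile state — the memoryless strategies of Player 1 are in one-to-one correspondence with the assignments of a tile of T to each cell of the grid, i.e., with the maps τ : ℕ×ℕ → T; moreover such a strategy makes the horizontal-constraint formula ⟨1⟩G[ (v₁ ⇒ ⋁_{(t₁,t₂)∈H} ⟨2⟩XX t₁ ∧ ⟨2⟩X(v₂ ∧ XX t₂)) ∧ (v₂ ⇒ ⋁_{(t₁,t₂)∈H} ⟨2⟩XX t₁ ∧ ⟨2⟩X(v₁ ∧ XX t₂)) ] together with its vertical counterpart hold if and only if the corresponding map τ satisfies (τ(i,j), τ(i+1,j)) ∈ H and (τ(i,j), τ(i,j+1)) ∈ V for all i,j. -/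

import Mathlib

/-!
# ATL with strategy contexts and memoryless strategies (ATL_sc^0)

Players and atomic propositions are coded as natural numbers.
-/

/-- A concurrent game structure: states labelled with atomic propositions (coded as
naturals), players coded as naturals, and a transition function assigning to each state
and each tuple of moves (one move per player) a successor state. -/
structure CGS : Type 1 where
  State : Type
  Move : Type
  move_nonempty : Nonempty Move
  label : State → ℕ → Prop
  trans : State → (ℕ → Move) → State

/-- Player `p` controls state `s`: the successor from `s` only depends on `p`'s move. -/
def Controls (G : CGS) (p : ℕ) (s : G.State) : Prop :=
  ∀ mv mv' : ℕ → G.Move, mv p = mv' p → G.trans s mv = G.trans s mv'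

/-- A game structure is turn-based if every state is controlled by a single player. -/
def TurnBased (G : CGS) : Prop := ∀ s : G.State, ∃ p : ℕ, Controls G p s

/-- A (memoryless) strategy context: a partial assignment of memoryless strategies
(functions from states to moves) to players. -/
def Ctx (G : CGS) : Type := ℕ → Option (G.State → G.Move)

/-- The empty strategy context. -/
def emptyCtx (G : CGS) : Ctx G := fun _ => none

/-- `π` is an outcome from state `s` compatible with the memoryless context `ctx`:
at each step, every player to whom `ctx` assigns a strategy plays according to it. -/
def IsOutcome (G : CGS) (ctx : Ctx G) (s : G.State) (π : ℕ → G.State) : Prop :=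
  π 0 = s ∧ ∀ i : ℕ, ∃ mv : ℕ → G.Move,
    (∀ p σ, ctx p = some σ → mv p = σ (π i)) ∧ π (i + 1) = G.trans (π i) mv

/-- Formulas of ATL_sc^0 (with LTL path modalities `X` and `U`); coalitions are
finite lists of players. -/
inductive Formula : Type where
  | atom : ℕ → Formula
  | neg : Formula → Formula
  | conj : Formula → Formula → Formula
  | next : Formula → Formula
  | untl : Formula → Formula → Formula
  | strat : List ℕ → Formula → Formula

/-- Satisfaction of a formula on a path, under a memoryless strategy context.
`strat A φ` (the quantifier `⟨A⟩φ`) assigns new memoryless strategies to the players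
of `A`, keeps the strategies of the other players from the current context, and
requires `φ` on all outcomes compatible with the resulting context. -/
def sat (G : CGS) : Formula → Ctx G → (ℕ → G.State) → Prop
  | .atom p, _, π => G.label (π 0) p
  | .neg φ, ctx, π => ¬ sat G φ ctx π
  | .conj φ ψ, ctx, π => sat G φ ctx π ∧ sat G ψ ctx π
  | .next φ, ctx, π => sat G φ ctx (fun n => π (n + 1))
  | .untl φ ψ, ctx, π => ∃ j : ℕ, sat G ψ ctx (fun n => π (n + j)) ∧
      ∀ k < j, sat G φ ctx (fun n => π (n + k))
  | .strat A φ, ctx, π => ∃ ctx' : Ctx G,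
      (∀ p, p ∉ A → ctx' p = ctx p) ∧
      (∀ p, p ∈ A → ∃ σ, ctx' p = some σ) ∧
      ∀ π' : ℕ → G.State, IsOutcome G ctx' (π 0) π' → sat G φ ctx' π'

/-- A state satisfies a formula (under a given context) if the formula holds on all
outcomes from that state compatible with the context. -/
def StateSatCtx (G : CGS) (ctx : Ctx G) (s : G.State) (φ : Formula) : Prop :=
  ∀ π : ℕ → G.State, IsOutcome G ctx s π → sat G φ ctx π

/-- A state satisfies a formula under the empty strategy context. -/
def StateSat (G : CGS) (s : G.State) (φ : Formula) : Prop :=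
  StateSatCtx G (emptyCtx G) s φ

/-- Satisfiability of an ATL_sc^0 formula in a turn-based game structure. -/
def SatTB (φ : Formula) : Prop :=
  ∃ G : CGS, TurnBased G ∧ ∃ s : G.State, StateSat G s φ

/-- An explicit injective encoding of formulas as natural numbers. -/
def encodeF : Formula → ℕ
  | .atom n => Nat.pair 0 n
  | .neg φ => Nat.pair 1 (encodeF φ)
  | .conj φ ψ => Nat.pair 2 (Nat.pair (encodeF φ) (encodeF ψ))
  | .next φ => Nat.pair 3 (encodeF φ)
  | .untl φ ψ => Nat.pair 4 (Nat.pair (encodeF φ) (encodeF ψ))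
  | .strat A φ => Nat.pair 5 (Nat.pair (Encodable.encode A) (encodeF φ))



namespace Formula

/-- Disjunction. -/
def fOr (φ ψ : Formula) : Formula := neg (conj (neg φ) (neg ψ))
/-- Implication. -/
def fImp (φ ψ : Formula) : Formula := fOr (neg φ) ψ
/-- Bi-implication. -/
def fIff (φ ψ : Formula) : Formula := conj (fImp φ ψ) (fImp ψ φ)
/-- True. -/
def top : Formula := fOr (atom 0) (neg (atom 0))
/-- False. -/
def bot : Formula := neg top
/-- Eventually (`F`). -/
def fut (φ : Formula) : Formula := untl top φ
/-- Globally (`G`). -/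
def glob (φ : Formula) : Formula := neg (fut (neg φ))
/-- Weak until (`W`): `G φ ∨ φ U ψ`. -/
def wuntl (φ ψ : Formula) : Formula := fOr (glob φ) (untl φ ψ)
/-- Finite disjunction. -/
def bigOr (l : List Formula) : Formula := l.foldr fOr bot
/-- Finite conjunction. -/
def bigAnd (l : List Formula) : Formula := l.foldr conj top
/-- Universal path quantification `A`, encoded as `⟨∅⟩`. -/
def Aq (φ : Formula) : Formula := strat [] φ
/-- Existential path quantification `E`. -/
def Eq (φ : Formula) : Formula := neg (Aq (neg φ))
/-- The strategy quantifier `⟨p⟩` for a single player `p`. -/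
def D (p : ℕ) (φ : Formula) : Formula := strat [p] φ
/-- The dual quantifier `[p]` over memoryless strategies of player `p`. -/
def B (p : ℕ) (φ : Formula) : Formula := neg (D p (neg φ))
/-- Two nested next modalities. -/
def X2 (φ : Formula) : Formula := next (next φ)
/-- Three nested next modalities. -/
def X3 (φ : Formula) : Formula := next (X2 φ)
/-- Four nested next modalities. -/
def X4 (φ : Formula) : Formula := next (X3 φ)

end Formula

open Formula

/-! Coding of the atomic propositions `{m, c, v₁, v₂, α, β, □, ○} ∪ T`:
`m ↦ 0`, `c ↦ 1`, `v₁ ↦ 2`, `v₂ ↦ 3`, `α ↦ 4`, `β ↦ 5`, `□ ↦ 6`, `○ ↦ 7`,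
and tile `t ↦ 8 + t`. -/

def pm : Formula := Formula.atom 0
def pc : Formula := Formula.atom 1
def pv1 : Formula := Formula.atom 2
def pv2 : Formula := Formula.atom 3
def pal : Formula := Formula.atom 4
def pbe : Formula := Formula.atom 5
def psq : Formula := Formula.atom 6
def pci : Formula := Formula.atom 7
def ptile (t : ℕ) : Formula := Formula.atom (8 + t)

/-- A tile system: tiles are `0, …, numTiles - 1`, with horizontal and vertical
matching relations given as finite lists of pairs. -/
structure TileSystem : Type where
  numTiles : ℕ
  H : List (ℕ × ℕ)
  V : List (ℕ × ℕ)

/-- The tile system admits a tiling of the quadrant ℕ×ℕ. -/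
def TilesQuadrant (ts : TileSystem) : Prop :=
  ∃ τ : ℕ → ℕ → ℕ, (∀ i j, τ i j < ts.numTiles) ∧
    (∀ i j, (τ i j, τ (i + 1) j) ∈ ts.H) ∧
    (∀ i j, (τ i j, τ i (j + 1)) ∈ ts.V)

/-- An explicit encoding of tile systems as natural numbers. -/
def encodeTS (ts : TileSystem) : ℕ := Encodable.encode (ts.numTiles, ts.H, ts.V)

/-- The list of tiles of a tile system. -/
def tilesOf (ts : TileSystem) : List ℕ := List.range ts.numTiles

/-- The atomic propositions `AP' = {m, c} ∪ T`. -/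
def APprime (ts : TileSystem) : List ℕ := 0 :: 1 :: (tilesOf ts).map (fun t => 8 + t)

/-- The atomic propositions `AP = AP' ∪ {v₁, v₂, α, β, □, ○}`. -/
def APall (ts : TileSystem) : List ℕ := APprime ts ++ [2, 3, 4, 5, 6, 7]

/-- Formula (1): labelling discipline (each state has exactly one proposition of `AP'`),
`A(m W c)`, the shape of choice and tile states, and turn-basedness via
`□ ⇔ ¬○` and `EX p ⇔ ⟨i⟩X p`. -/
def phi1 (ts : TileSystem) : Formula :=
  bigAnd [
    Aq (glob (bigOr ((APprime ts).map fun p =>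
      conj (atom p) (bigAnd (((APprime ts).filter (· ≠ p)).map fun q => neg (atom q)))))),
    Aq (wuntl pm pc),
    Aq (glob (fImp pc (bigAnd [psq,
      bigAnd ((tilesOf ts).map fun t => D 1 (next (ptile t))),
      Aq (next (bigOr ((tilesOf ts).map fun t => Aq (glob (ptile t)))))]))),
    Aq (glob (bigAnd [
      fIff psq (neg pci),
      fImp psq (bigAnd ((APall ts).map fun p =>
        fIff (Eq (next (atom p))) (D 1 (next (atom p))))),
      fImp pci (bigAnd ((APall ts).map fun p =>
        fIff (Eq (next (atom p))) (D 2 (next (atom p)))))]))]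

/-- Formula (2): the four-state cell gadgets: entry `□`-states labelled `m` and
exactly one of `v₁, v₂`, middle `○`-states coloured `α` or `β` by Player 1,
exit `○`-states with neither colour. -/
def phi2 (_ts : TileSystem) : Formula :=
  bigAnd [
    Aq (glob (fImp pm (fOr (bigAnd [psq, neg pal, neg pbe])
      (conj pci (neg (conj pal pbe)))))),
    Aq (glob (conj (fImp (conj pm psq) (fIff pv1 (neg pv2)))
      (fImp (fOr pv1 pv2) (conj pm psq)))),
    Aq (glob (fImp (conj pm psq) (bigAnd [
      Aq (next (bigAnd [pm, pci, fOr pal pbe,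
        Aq (next (bigAnd [pm, pci, neg pal, neg pbe]))])),
      D 1 (next pal),
      D 1 (next pbe)])))]

/-- Formula (3): constraints on transitions leaving a cell. -/
def phi3 (_ts : TileSystem) : Formula :=
  bigAnd [
    Aq (glob (fImp (bigOr [Eq (next pc), Eq (next pv1), Eq (next pv2)])
      (bigAnd [pm, pci, neg pal, neg pbe]))),
    Aq (glob (fImp (bigAnd [pm, pci, neg pal, neg pbe])
      (bigAnd [Eq (next pc), Eq (next pv1), Eq (next pv2),
        Aq (next (bigOr [pc, pv1, pv2]))])))]

/-- Formula (4): the tiling constraints, under a memoryless strategy of Player 1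
choosing a tile for each cell (distances adapted to the four-state cell gadget). -/
def phi4 (ts : TileSystem) : Formula :=
  D 1 (glob (bigAnd [
    fImp pv1 (bigOr (ts.H.map fun p =>
      conj (D 2 (X4 (ptile p.1))) (D 2 (X3 (conj pv2 (X4 (ptile p.2))))))),
    fImp pv2 (bigOr (ts.H.map fun p =>
      conj (D 2 (X4 (ptile p.1))) (D 2 (X3 (conj pv1 (X4 (ptile p.2))))))),
    fImp pv1 (bigOr (ts.V.map fun p =>
      conj (D 2 (X4 (ptile p.1))) (D 2 (X3 (conj pv1 (X4 (ptile p.2))))))),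
    fImp pv2 (bigOr (ts.V.map fun p =>
      conj (D 2 (X4 (ptile p.1))) (D 2 (X3 (conj pv2 (X4 (ptile p.2)))))))]))

/-- Formula (5): `AG[(m ∧ □) ⇒ [2](⟨∅⟩X³(c ∨ v₁) ∨ ⟨∅⟩X³(c ∨ v₂))]`,
forcing each cell to have a single exit state. -/
def phi5 : Formula :=
  Aq (glob (fImp (conj pm psq)
    (B 2 (fOr (Aq (X3 (fOr pc pv1))) (Aq (X3 (fOr pc pv2)))))))

/-- Formula (6): `AG[(m ∧ □) ⇒ [1]((⟨2⟩X³(v₁ ∧ Xα) ∧ ⟨2⟩X³(v₂ ∧ Xα)) ⇒ [2]⟨∅⟩X³Xα)]`,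
forcing each cell to have exactly two successor cells. -/
def phi6 : Formula :=
  Aq (glob (fImp (conj pm psq)
    (B 1 (fImp (conj (D 2 (X3 (conj pv1 (next pal)))) (D 2 (X3 (conj pv2 (next pal)))))
      (B 2 (Aq (X3 (next pal))))))))

/-- Formula (7): `[1]⟨∅⟩G[(m ∧ □ ∧ v₁) ⇒ ((⟨2⟩X³(v₁ ∧ [2]X³Xα)) ⇒
(⟨2⟩X³(¬v₁ ∧ X³(¬v₁ ∧ Xα))))]` together with its `v₂`-counterpart, forcing the two
successor cells of every cell to share a common successor cell. -/
def phi7 : Formula :=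
  conj
    (B 1 (Aq (glob (fImp (bigAnd [pm, psq, pv1])
      (fImp (D 2 (X3 (conj pv1 (B 2 (X3 (next pal))))))
        (D 2 (X3 (conj (neg pv1) (X3 (conj (neg pv1) (next pal)))))))))))
    (B 1 (Aq (glob (fImp (bigAnd [pm, psq, pv2])
      (fImp (D 2 (X3 (conj pv2 (B 2 (X3 (next pal))))))
        (D 2 (X3 (conj (neg pv2) (X3 (conj (neg pv2) (next pal)))))))))))

/-- The reduction formula `Φ_{T,H,V}`: the conjunction of formulas (1)–(7), together
with the requirement that the initial state be a square state of a cell of the main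
part. -/
def Phi (ts : TileSystem) : Formula :=
  bigAnd [conj pm psq, phi1 ts, phi2 ts, phi3 ts, phi4 ts, phi5, phi6, phi7]

/-- The atomic propositions occurring in a formula. -/
def atomsOf : Formula → List ℕ
  | .atom n => [n]
  | .neg φ => atomsOf φ
  | .conj φ ψ => atomsOf φ ++ atomsOf ψ
  | .next φ => atomsOf φ
  | .untl φ ψ => atomsOf φ ++ atomsOf ψ
  | .strat _ φ => atomsOf φ

/-- The players occurring (in coalitions) in a formula. -/
def playersOf : Formula → List ℕ
  | .atom _ => []
  | .neg φ => playersOf φ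
  | .conj φ ψ => playersOf φ ++ playersOf ψ
  | .next φ => playersOf φ
  | .untl φ ψ => playersOf φ ++ playersOf ψ
  | .strat A φ => A ++ playersOf φ


/-! ## The simple grid-shaped game structure (one main state per cell) -/

/-- States of the simple grid game: one main state and one choice state per cell of
the quadrant, plus one tile state per tile. -/
inductive SState : Type where
  | main (i j : ℕ)
  | choice (i j : ℕ)
  | tile (t : ℕ)

/-- Labelling: main states carry `m`, `○` and `v₁`/`v₂` alternating along horizontal
lines; choice states carry `c` and `□`; tile states carry their tile and `○`. -/
def sLabel : SState → ℕ → Prop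
  | .main i _, p => p = 0 ∨ p = 7 ∨ (p = 2 ∧ i % 2 = 0) ∨ (p = 3 ∧ i % 2 = 1)
  | .choice _ _, p => p = 1 ∨ p = 6
  | .tile t, p => p = 8 + t ∨ p = 7

/-- Transitions: at a main state, Player 2 moves to the right neighbour, the top
neighbour, or the associated choice state; at a choice state, Player 1 picks a tile
state; tile states loop on themselves. -/
def sTrans (n : ℕ) : SState → (ℕ → ℕ) → SState
  | .main i j, mv =>
      if mv 2 % 3 = 0 then .main (i + 1) j
      else if mv 2 % 3 = 1 then .main i (j + 1)
      else .choice i j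
  | .choice _ _, mv => .tile (mv 1 % max 1 n)
  | .tile t, _ => .tile t

/-- The simple grid-shaped turn-based game structure over a tile system. -/
def SimpleGrid (ts : TileSystem) : CGS where
  State := SState
  Move := ℕ
  move_nonempty := ⟨0⟩
  label := sLabel
  trans := sTrans ts.numTiles

/-- The tile assignment `τ : ℕ×ℕ → T` induced by a memoryless strategy of Player 1:
the tile chosen at the choice state of each cell. -/
def toTau (ts : TileSystem) (σ : SState → ℕ) : ℕ → ℕ → ℕ :=
  fun i j => σ (SState.choice i j) % max 1 ts.numTiles

/-- The strategy context in which Player 1 follows the memoryless strategy `σ` and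
no other player is assigned a strategy. -/
def ctx1 (ts : TileSystem) (σ : SState → ℕ) : Ctx (SimpleGrid ts) :=
  fun p => if p = 1 then some σ else none

open Formula in
/-- The horizontal-constraint formula
`G[(v₁ ⇒ ⋁_{(t₁,t₂)∈H} ⟨2⟩XX t₁ ∧ ⟨2⟩X(v₂ ∧ XX t₂)) ∧ (v₂ ⇒ …)]`
together with its vertical counterpart (its body; it is to be evaluated in the
context of a memoryless strategy of Player 1, i.e. under the quantifier `⟨1⟩`). -/
def HVbody (ts : TileSystem) : Formula :=
  glob (bigAnd [
    fImp pv1 (bigOr (ts.H.map fun p =>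
      conj (D 2 (X2 (ptile p.1))) (D 2 (next (conj pv2 (X2 (ptile p.2))))))),
    fImp pv2 (bigOr (ts.H.map fun p =>
      conj (D 2 (X2 (ptile p.1))) (D 2 (next (conj pv1 (X2 (ptile p.2))))))),
    fImp pv1 (bigOr (ts.V.map fun p =>
      conj (D 2 (X2 (ptile p.1))) (D 2 (next (conj pv1 (X2 (ptile p.2))))))),
    fImp pv2 (bigOr (ts.V.map fun p =>
      conj (D 2 (X2 (ptile p.1))) (D 2 (next (conj pv2 (X2 (ptile p.2)))))))])


/-! ### Auxiliary lemmas -/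

deriving instance DecidableEq for SState

section SatLemmas

open Formula
variable {G : CGS}

lemma sat_top' (ctx : Ctx G) (π : ℕ → G.State) : sat G Formula.top ctx π := by
  simp only [Formula.top, Formula.fOr, sat]; tauto

lemma sat_fOr' (φ ψ : Formula) (ctx : Ctx G) (π : ℕ → G.State) :
    sat G (fOr φ ψ) ctx π ↔ sat G φ ctx π ∨ sat G ψ ctx π := by
  simp only [fOr, sat]; tauto

lemma sat_fImp' (φ ψ : Formula) (ctx : Ctx G) (π : ℕ → G.State) :
    sat G (fImp φ ψ) ctx π ↔ (sat G φ ctx π → sat G ψ ctx π) := by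
  simp only [fImp]; rw [sat_fOr']; simp only [sat]; tauto

lemma sat_bot' (ctx : Ctx G) (π : ℕ → G.State) : ¬ sat G Formula.bot ctx π := by
  simp only [Formula.bot, sat]
  exact fun h => h (sat_top' ctx π)

lemma sat_glob' (φ : Formula) (ctx : Ctx G) (π : ℕ → G.State) :
    sat G (glob φ) ctx π ↔ ∀ k, sat G φ ctx (fun n => π (n + k)) := by
  simp only [glob, fut, sat]
  constructor
  · intro h k
    by_contra hk
    exact h ⟨k, hk, fun _ _ => sat_top' _ _⟩
  · rintro h ⟨j, hj, -⟩
    exact hj (h j)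

lemma sat_bigOr' (l : List Formula) (ctx : Ctx G) (π : ℕ → G.State) :
    sat G (bigOr l) ctx π ↔ ∃ φ ∈ l, sat G φ ctx π := by
  induction l with
  | nil => simpa [bigOr] using sat_bot' ctx π
  | cons a l ih =>
    show sat G (fOr a (bigOr l)) ctx π ↔ _
    rw [sat_fOr', ih]
    simp

lemma sat_bigAnd' (l : List Formula) (ctx : Ctx G) (π : ℕ → G.State) :
    sat G (bigAnd l) ctx π ↔ ∀ φ ∈ l, sat G φ ctx π := by
  induction l with
  | nil => simpa [bigAnd] using sat_top' ctx π
  | cons a l ih =>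
    show sat G (conj a (bigAnd l)) ctx π ↔ _
    simp only [sat, ih, List.forall_mem_cons]

end SatLemmas

section Grid

open Formula

/-- The context where Player 1 plays `σ` and Player 2 plays `σ₂`. -/
def ctx2 (ts : TileSystem) (σ σ₂ : SState → ℕ) : Ctx (SimpleGrid ts) :=
  fun p => if p = 1 then some σ else if p = 2 then some σ₂ else none

/-- One step of the grid game when Player 1 plays `σ` and Player 2 plays `σ₂`. -/
def gstep (ts : TileSystem) (σ σ₂ : SState → ℕ) (s : SState) : SState :=
  sTrans ts.numTiles s (fun p => if p = 2 then σ₂ s else σ s)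

/-- The run of the grid game from `s` when Player 1 plays `σ` and Player 2 plays `σ₂`. -/
def grun (ts : TileSystem) (σ σ₂ : SState → ℕ) (s : SState) : ℕ → SState
  | 0 => s
  | k + 1 => gstep ts σ σ₂ (grun ts σ σ₂ s k)

lemma grun_isOutcome (ts : TileSystem) (ctx' : Ctx (SimpleGrid ts)) (σ σ₂ : SState → ℕ)
    (hc : ∀ p f, ctx' p = some f → (p = 1 ∧ f = σ) ∨ (p = 2 ∧ f = σ₂)) (s : SState) :
    IsOutcome (SimpleGrid ts) ctx' s (grun ts σ σ₂ s) := by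
  refine ⟨rfl, fun k => ⟨fun p => if p = 2 then σ₂ (grun ts σ σ₂ s k)
    else σ (grun ts σ σ₂ s k), ?_, rfl⟩⟩
  intro p f hp
  rcases hc p f hp with ⟨rfl, rfl⟩ | ⟨rfl, rfl⟩ <;> simp

lemma sTrans_eq_gstep (ts : TileSystem) (σ σ₂ : SState → ℕ) (s : SState) (mv : ℕ → ℕ)
    (h1 : mv 1 = σ s) (h2 : mv 2 = σ₂ s) :
    sTrans ts.numTiles s mv = gstep ts σ σ₂ s := by
  cases s <;> simp [sTrans, gstep, ← h1, ← h2]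

lemma outcome_gstep {ts : TileSystem} {σ σ₂ : SState → ℕ} {s : SState} {π : ℕ → SState}
    (hout : IsOutcome (SimpleGrid ts) (ctx2 ts σ σ₂) s π) (k : ℕ) :
    π (k + 1) = gstep ts σ σ₂ (π k) := by
  obtain ⟨-, h⟩ := hout
  obtain ⟨mv, hmv, htr⟩ := h k
  have h1 : mv 1 = σ (π k) := hmv 1 σ (by simp [ctx2])
  have h2 : mv 2 = σ₂ (π k) := hmv 2 σ₂ (by simp [ctx2])
  rw [htr]
  exact sTrans_eq_gstep ts σ σ₂ (π k) mv h1 h2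

lemma gstep_main_cases (ts : TileSystem) (σ σ₂ : SState → ℕ) (i j : ℕ) :
    gstep ts σ σ₂ (.main i j) = .main (i + 1) j ∨
    gstep ts σ σ₂ (.main i j) = .main i (j + 1) ∨
    gstep ts σ σ₂ (.main i j) = .choice i j := by
  simp only [gstep, sTrans]
  split_ifs <;> simp

lemma gstep_choice (ts : TileSystem) (σ σ₂ : SState → ℕ) (i j : ℕ) :
    gstep ts σ σ₂ (.choice i j) = .tile (toTau ts σ i j) := by
  simp [gstep, sTrans, toTau]

lemma gstep_tile (ts : TileSystem) (σ σ₂ : SState → ℕ) (t : ℕ) :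
    gstep ts σ σ₂ (.tile t) = .tile t := by
  simp [gstep, sTrans]

lemma gstep_main_ne_tile (ts : TileSystem) (σ σ₂ : SState → ℕ) (i j t : ℕ) :
    gstep ts σ σ₂ (.main i j) ≠ .tile t := by
  rcases gstep_main_cases ts σ σ₂ i j with h | h | h <;> simp [h]

lemma gstep_main_eq_choice {ts : TileSystem} {σ σ₂ : SState → ℕ} {i j i' j' : ℕ}
    (h : gstep ts σ σ₂ (.main i j) = .choice i' j') : i' = i ∧ j' = j := by
  rcases gstep_main_cases ts σ σ₂ i j with h' | h' | h' <;> rw [h'] at h <;> simp_all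

lemma gstep_eq_tile {ts : TileSystem} {σ σ₂ : SState → ℕ} {s : SState} {t : ℕ}
    (h : gstep ts σ σ₂ s = .tile t) :
    (∃ i j, s = .choice i j ∧ t = toTau ts σ i j) ∨ s = .tile t := by
  cases s with
  | main i j => exact absurd h (gstep_main_ne_tile ts σ σ₂ _ _ _)
  | choice i j =>
    rw [gstep_choice] at h
    left
    exact ⟨i, j, rfl, by injection h with h'; omega⟩
  | tile t' => rw [gstep_tile] at h; right; exact h

lemma eq_tile_of_label {t : ℕ} {s : SState} (h : sLabel s (8 + t)) : s = .tile t := by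
  cases s <;> simp [sLabel] at h ⊢ <;> omega

lemma ctx'_cases {ts : TileSystem} {σ σ₂ : SState → ℕ} {ctx' : Ctx (SimpleGrid ts)}
    (hA : ∀ p, p ∉ [2] → ctx' p = ctx1 ts σ p) (h2 : ctx' 2 = some σ₂) :
    ∀ p f, ctx' p = some f → (p = 1 ∧ f = σ) ∨ (p = 2 ∧ f = σ₂) := by
  intro p f hp
  rcases eq_or_ne p 2 with rfl | hp2
  · rw [h2] at hp
    exact Or.inr ⟨rfl, (Option.some_inj.mp hp).symm⟩
  rcases eq_or_ne p 1 with rfl | hp1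
  · rw [hA 1 (by simp)] at hp
    simp [ctx1] at hp
    exact Or.inl ⟨rfl, Option.some_inj.mp hp.symm⟩
  · rw [hA p (by simp [hp2])] at hp
    simp [ctx1, hp1] at hp

lemma ctx2_eq_ctx1 {ts : TileSystem} (σ σ₂ : SState → ℕ) (p : ℕ) (hp : p ∉ [2]) :
    ctx2 ts σ σ₂ p = ctx1 ts σ p := by
  simp only [List.mem_singleton] at hp
  by_cases h1 : p = 1 <;> simp [ctx2, ctx1, h1, hp]

lemma satD2_X2 (ts : TileSystem) (σ : SState → ℕ) (π : ℕ → SState) (i j : ℕ)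
    (hπ : π 0 = .main i j) (t : ℕ) :
    sat (SimpleGrid ts) (D 2 (X2 (ptile t))) (ctx1 ts σ) π ↔ t = toTau ts σ i j := by
  constructor
  · rintro ⟨ctx', hA, hB, hC⟩
    obtain ⟨σ₂, h2⟩ := hB 2 (by simp)
    have hrun := hC _ (grun_isOutcome ts ctx' σ σ₂ (ctx'_cases hA h2) (π 0))
    simp only [X2, ptile, sat] at hrun
    rw [hπ] at hrun
    have ht : grun ts σ σ₂ (.main i j) (0 + 1 + 1) = .tile t := eq_tile_of_label hrun
    rw [show grun ts σ σ₂ (SState.main i j) (0 + 1 + 1)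
      = gstep ts σ σ₂ (gstep ts σ σ₂ (.main i j)) from rfl] at ht
    rcases gstep_eq_tile ht with ⟨i', j', hc, hτ⟩ | hti
    · obtain ⟨rfl, rfl⟩ := gstep_main_eq_choice hc
      exact hτ
    · exact absurd hti (gstep_main_ne_tile ts σ σ₂ _ _ _)
  · intro ht
    refine ⟨ctx2 ts σ (fun _ => 2), ctx2_eq_ctx1 σ (fun _ => 2), ?_, ?_⟩
    · intro p hp
      simp only [List.mem_singleton] at hp
      subst hp
      exact ⟨_, rfl⟩
    · intro π' hout
      have e1 := outcome_gstep hout 0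
      have e2 := outcome_gstep hout 1
      rw [hout.1, hπ] at e1
      have s1 : gstep ts σ (fun _ => 2) (.main i j) = .choice i j := by
        simp [gstep, sTrans]
      rw [s1] at e1
      rw [e1, gstep_choice] at e2
      simp only [X2, ptile, sat]
      show sLabel (π' (0 + 1 + 1)) (8 + t)
      rw [e2]
      simp [sLabel]
      omega

lemma satD2_next (ts : TileSystem) (σ : SState → ℕ) (π : ℕ → SState) (i j : ℕ)
    (hπ : π 0 = .main i j) (a : ℕ) (ha : a = 2 ∨ a = 3) (t : ℕ) :
    sat (SimpleGrid ts) (D 2 (next (conj (.atom a) (X2 (ptile t))))) (ctx1 ts σ) π ↔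
      (sLabel (.main (i + 1) j) a ∧ t = toTau ts σ (i + 1) j) ∨
      (sLabel (.main i (j + 1)) a ∧ t = toTau ts σ i (j + 1)) := by
  constructor
  · rintro ⟨ctx', hA, hB, hC⟩
    obtain ⟨σ₂, h2⟩ := hB 2 (by simp)
    have hrun := hC _ (grun_isOutcome ts ctx' σ σ₂ (ctx'_cases hA h2) (π 0))
    simp only [X2, ptile, sat] at hrun
    rw [hπ] at hrun
    obtain ⟨hlab, htile⟩ := hrun
    have hlab : sLabel (grun ts σ σ₂ (.main i j) 1) a := hlab
    have ht : grun ts σ σ₂ (.main i j) (0 + 1 + 1 + 1) = .tile t := eq_tile_of_label htile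
    rw [show grun ts σ σ₂ (SState.main i j) (0 + 1 + 1 + 1)
      = gstep ts σ σ₂ (grun ts σ σ₂ (.main i j) 2) from rfl] at ht
    rcases gstep_eq_tile ht with ⟨i', j', hc, hτ⟩ | hti
    · -- grun 2 = choice i' j'
      rw [show grun ts σ σ₂ (SState.main i j) 2
        = gstep ts σ σ₂ (grun ts σ σ₂ (.main i j) 1) from rfl] at hc
      rcases gstep_main_cases ts σ σ₂ i j with h1 | h1 | h1 <;>
        rw [show grun ts σ σ₂ (SState.main i j) 1
          = gstep ts σ σ₂ (.main i j) from rfl, h1] at hc hlab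
      · obtain ⟨rfl, rfl⟩ := gstep_main_eq_choice hc
        exact Or.inl ⟨hlab, hτ⟩
      · obtain ⟨rfl, rfl⟩ := gstep_main_eq_choice hc
        exact Or.inr ⟨hlab, hτ⟩
      · exact absurd (hc.symm.trans (gstep_choice ts σ σ₂ i j)) (by simp)
    · rw [show grun ts σ σ₂ (SState.main i j) 2
        = gstep ts σ σ₂ (grun ts σ σ₂ (.main i j) 1) from rfl] at hti
      rcases gstep_eq_tile hti with ⟨i', j', hc, hτ⟩ | hti'
      · rw [show grun ts σ σ₂ (SState.main i j) 1
          = gstep ts σ σ₂ (.main i j) from rfl] at hc hlab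
        rw [hc] at hlab
        rcases ha with rfl | rfl <;> simp [sLabel] at hlab
      · rw [show grun ts σ σ₂ (SState.main i j) 1
          = gstep ts σ σ₂ (.main i j) from rfl] at hti'
        exact absurd hti' (gstep_main_ne_tile ts σ σ₂ _ _ _)
  · intro h
    rcases h with ⟨hlab, ht⟩ | ⟨hlab, ht⟩
    · classical
      refine ⟨ctx2 ts σ (fun s => if s = .main i j then 0 else 2), ctx2_eq_ctx1 σ (fun s => if s = .main i j then 0 else 2), ?_, ?_⟩
      · intro p hp
        simp only [List.mem_singleton] at hp
        subst hp
        exact ⟨_, rfl⟩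
      · intro π' hout
        have e1 := outcome_gstep hout 0
        have e2 := outcome_gstep hout 1
        have e3 := outcome_gstep hout 2
        rw [hout.1, hπ] at e1
        have s1 : gstep ts σ (fun s => if s = .main i j then 0 else 2) (.main i j)
            = .main (i + 1) j := by
          simp [gstep, sTrans]
        have s2 : gstep ts σ (fun s => if s = .main i j then 0 else 2) (.main (i + 1) j)
            = .choice (i + 1) j := by
          have : (SState.main (i + 1) j) ≠ .main i j := by simp
          simp [gstep, sTrans, this]
        rw [s1] at e1
        rw [e1, s2] at e2
        rw [e2, gstep_choice] at e3
        simp only [X2, ptile, sat]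
        constructor
        · show sLabel (π' (0 + 1)) a
          rw [e1]; exact hlab
        · show sLabel (π' (0 + 1 + 1 + 1)) (8 + t)
          rw [e3]
          simp [sLabel]; omega
    · classical
      refine ⟨ctx2 ts σ (fun s => if s = .main i j then 1 else 2), ctx2_eq_ctx1 σ (fun s => if s = .main i j then 1 else 2), ?_, ?_⟩
      · intro p hp
        simp only [List.mem_singleton] at hp
        subst hp
        exact ⟨_, rfl⟩
      · intro π' hout
        have e1 := outcome_gstep hout 0
        have e2 := outcome_gstep hout 1
        have e3 := outcome_gstep hout 2
        rw [hout.1, hπ] at e1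
        have s1 : gstep ts σ (fun s => if s = .main i j then 1 else 2) (.main i j)
            = .main i (j + 1) := by
          simp [gstep, sTrans]
        have s2 : gstep ts σ (fun s => if s = .main i j then 1 else 2) (.main i (j + 1))
            = .choice i (j + 1) := by
          have : (SState.main i (j + 1)) ≠ .main i j := by simp
          simp [gstep, sTrans, this]
        rw [s1] at e1
        rw [e1, s2] at e2
        rw [e2, gstep_choice] at e3
        simp only [X2, ptile, sat]
        constructor
        · show sLabel (π' (0 + 1)) a
          rw [e1]; exact hlab
        · show sLabel (π' (0 + 1 + 1 + 1)) (8 + t)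
          rw [e3]
          simp [sLabel]; omega

lemma mem_pair_iff (R : List (ℕ × ℕ)) (x y : ℕ) :
    (∃ p ∈ R, p.1 = x ∧ p.2 = y) ↔ (x, y) ∈ R := by
  constructor
  · rintro ⟨⟨a, b⟩, hm, rfl, rfl⟩; exact hm
  · intro h; exact ⟨(x, y), h, rfl, rfl⟩

end Grid

section Main

open Formula

lemma sat_conj' {G : CGS} (φ ψ : Formula) (ctx : Ctx G) (π : ℕ → G.State) :
    sat G (conj φ ψ) ctx π ↔ sat G φ ctx π ∧ sat G ψ ctx π := Iff.rfl

lemma sat_HVinner_main (ts : TileSystem) (σ : SState → ℕ) (π : ℕ → SState) (i j : ℕ)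
    (hπ : π 0 = .main i j) :
    sat (SimpleGrid ts) (bigAnd [
      fImp pv1 (bigOr (ts.H.map fun p =>
        conj (D 2 (X2 (ptile p.1))) (D 2 (next (conj pv2 (X2 (ptile p.2))))))),
      fImp pv2 (bigOr (ts.H.map fun p =>
        conj (D 2 (X2 (ptile p.1))) (D 2 (next (conj pv1 (X2 (ptile p.2))))))),
      fImp pv1 (bigOr (ts.V.map fun p =>
        conj (D 2 (X2 (ptile p.1))) (D 2 (next (conj pv1 (X2 (ptile p.2))))))),
      fImp pv2 (bigOr (ts.V.map fun p =>
        conj (D 2 (X2 (ptile p.1))) (D 2 (next (conj pv2 (X2 (ptile p.2)))))))])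
      (ctx1 ts σ) π ↔
    ((toTau ts σ i j, toTau ts σ (i + 1) j) ∈ ts.H ∧
     (toTau ts σ i j, toTau ts σ i (j + 1)) ∈ ts.V) := by
  obtain ⟨π, rfl⟩ : ∃ π' : ℕ → (SimpleGrid ts).State, π' = π := ⟨π, rfl⟩
  have hv1 : sat (SimpleGrid ts) (.atom 2) (ctx1 ts σ) π ↔ i % 2 = 0 := by
    show sLabel (π 0) 2 ↔ _
    rw [hπ]; simp [sLabel]
  have hv2 : sat (SimpleGrid ts) (.atom 3) (ctx1 ts σ) π ↔ i % 2 = 1 := by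
    show sLabel (π 0) 3 ↔ _
    rw [hπ]; simp [sLabel]
  refine (sat_bigAnd' _ _ _).trans ?_
  simp only [List.forall_mem_cons, List.forall_mem_nil, and_true]
  simp only [pv1, pv2, sat_fImp', sat_bigOr', List.mem_map, exists_exists_and_eq_and,
    sat_conj', satD2_X2 ts σ π i j hπ, satD2_next ts σ π i j hπ 2 (Or.inl rfl),
    satD2_next ts σ π i j hπ 3 (Or.inr rfl), hv1, hv2, sLabel]
  rcases Nat.mod_two_eq_zero_or_one i with hi | hi <;>
    have h1 : (i + 1) % 2 = 1 ↔ i % 2 = 0 := by omega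
  all_goals {
    have h0 : (i + 1) % 2 = 0 ↔ i % 2 = 1 := by omega
    simp only [hi, h1, h0]
    simp [mem_pair_iff]
    try tauto
  }

lemma sat_HVinner_notmain (ts : TileSystem) (σ : SState → ℕ) (π : ℕ → SState)
    (hn2 : ¬ sLabel (π 0) 2) (hn3 : ¬ sLabel (π 0) 3) :
    sat (SimpleGrid ts) (bigAnd [
      fImp pv1 (bigOr (ts.H.map fun p =>
        conj (D 2 (X2 (ptile p.1))) (D 2 (next (conj pv2 (X2 (ptile p.2))))))),
      fImp pv2 (bigOr (ts.H.map fun p =>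
        conj (D 2 (X2 (ptile p.1))) (D 2 (next (conj pv1 (X2 (ptile p.2))))))),
      fImp pv1 (bigOr (ts.V.map fun p =>
        conj (D 2 (X2 (ptile p.1))) (D 2 (next (conj pv1 (X2 (ptile p.2))))))),
      fImp pv2 (bigOr (ts.V.map fun p =>
        conj (D 2 (X2 (ptile p.1))) (D 2 (next (conj pv2 (X2 (ptile p.2)))))))])
      (ctx1 ts σ) π := by
  refine (sat_bigAnd' _ _ _).mpr ?_
  intro φ hφ
  simp only [List.mem_cons, List.not_mem_nil, or_false] at hφ
  rcases hφ with rfl | rfl | rfl | rfl <;> refine (sat_fImp' _ _ _ _).mpr ?_ <;> intro h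
  · exact absurd h hn2
  · exact absurd h hn3
  · exact absurd h hn2
  · exact absurd h hn3

end Main


/-- **Theorem.** In the grid-shaped turn-based game structure over a tile system
`(T, H, V)`, the memoryless strategies of Player 1 are in one-to-one correspondence
with the assignments of a tile to each cell, i.e. with the maps `τ : ℕ×ℕ → T`
(the correspondence `σ ↦ τ_σ` is onto the tile assignments, and two strategies
correspond to the same map iff they take the same transition at every choice state —
the only states where Player 1's move matters); moreover such a strategy makes the
horizontal-constraint formula
`⟨1⟩G[(v₁ ⇒ ⋁_{(t₁,t₂)∈H} ⟨2⟩XX t₁ ∧ ⟨2⟩X(v₂ ∧ XX t₂)) ∧ (v₂ ⇒ …)]`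
together with its vertical counterpart hold iff the corresponding map `τ_σ` satisfies
`(τ(i,j), τ(i+1,j)) ∈ H` and `(τ(i,j), τ(i,j+1)) ∈ V` for all `i, j`. -/
theorem memoryless_strategies_correspond_to_tilings (ts : TileSystem) :
    (∀ τ : ℕ → ℕ → ℕ, (∀ i j, τ i j < ts.numTiles) →
      ∃ σ : SState → ℕ, toTau ts σ = fun i j => τ i j) ∧
    (0 < ts.numTiles → ∀ σ : SState → ℕ, ∀ i j, toTau ts σ i j < ts.numTiles) ∧
    (∀ σ σ' : SState → ℕ, toTau ts σ = toTau ts σ' ↔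
      ∀ i j : ℕ,
        (SimpleGrid ts).trans (SState.choice i j) (fun _ => σ (SState.choice i j))
          = (SimpleGrid ts).trans (SState.choice i j) (fun _ => σ' (SState.choice i j))) ∧
    (∀ σ : SState → ℕ,
      (∀ i j : ℕ, StateSatCtx (SimpleGrid ts) (ctx1 ts σ) (SState.main i j) (HVbody ts)) ↔
      ((∀ i j, (toTau ts σ i j, toTau ts σ (i + 1) j) ∈ ts.H) ∧
       (∀ i j, (toTau ts σ i j, toTau ts σ i (j + 1)) ∈ ts.V))) := by
  refine ⟨?_, ?_, ?_, ?_⟩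
  · -- surjectivity onto tile maps
    intro τ hτ
    refine ⟨fun s => match s with | .choice i j => τ i j | _ => 0, ?_⟩
    funext i j
    show τ i j % max 1 ts.numTiles = τ i j
    have := hτ i j
    exact Nat.mod_eq_of_lt (by omega)
  · -- the induced map assigns tiles
    intro hn σ i j
    show σ (SState.choice i j) % max 1 ts.numTiles < ts.numTiles
    have hm : max 1 ts.numTiles = ts.numTiles := by omega
    rw [hm]
    exact Nat.mod_lt _ hn
  · -- injectivity up to the transitions at choice states
    intro σ σ'
    constructor
    · intro h i j
      have hij : toTau ts σ i j = toTau ts σ' i j := by rw [h]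
      show sTrans ts.numTiles (SState.choice i j) (fun _ => σ (SState.choice i j))
          = sTrans ts.numTiles (SState.choice i j) (fun _ => σ' (SState.choice i j))
      simp only [sTrans]
      simp only [toTau] at hij
      rw [hij]
    · intro h
      funext i j
      have hij := h i j
      have hij' : sTrans ts.numTiles (SState.choice i j) (fun _ => σ (SState.choice i j))
          = sTrans ts.numTiles (SState.choice i j) (fun _ => σ' (SState.choice i j)) := hij
      simp only [sTrans, SState.tile.injEq] at hij'
      exact hij'
  · -- the semantic characterisation
    intro σ
    constructor
    · intro h
      have key : ∀ i j, (toTau ts σ i j, toTau ts σ (i + 1) j) ∈ ts.H ∧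
          (toTau ts σ i j, toTau ts σ i (j + 1)) ∈ ts.V := by
        intro i j
        have hout : IsOutcome (SimpleGrid ts) (ctx1 ts σ) (SState.main i j)
            (grun ts σ (fun _ => 0) (SState.main i j)) := by
          apply grun_isOutcome
          intro p f hp
          simp only [ctx1] at hp
          split at hp
          · exact Or.inl ⟨by assumption, (Option.some_inj.mp hp).symm⟩
          · simp at hp
        have hs := h i j _ hout
        unfold HVbody at hs
        replace hs := (sat_glob' _ _ _).mp hs
        have h0 := hs 0
        exact (sat_HVinner_main ts σ (fun n => grun ts σ (fun _ => 0) (SState.main i j) (n + 0)) i j rfl).mp h0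
      exact ⟨fun i j => (key i j).1, fun i j => (key i j).2⟩
    · rintro ⟨hH, hV⟩ i j π hout
      unfold HVbody
      rw [sat_glob']
      intro k
      cases hs : π k with
      | main i' j' =>
        refine (sat_HVinner_main ts σ _ i' j' ?_).mpr ⟨hH i' j', hV i' j'⟩
        show π (0 + k) = _
        rw [Nat.zero_add, hs]
      | choice i' j' =>
        refine sat_HVinner_notmain ts σ _ ?_ ?_ <;>
          · show ¬ sLabel (π (0 + k)) _
            rw [Nat.zero_add, hs]
            simp [sLabel]
      | tile t =>
        refine sat_HVinner_notmain ts σ _ ?_ ?_ <;>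
          · show ¬ sLabel (π (0 + k)) _
            rw [Nat.zero_add, hs]
            simp [sLabel]
            omega
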